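/- arXiv:2402.08860 — 2 statements merged into one kernel-verified Lean document; each statement's English description precedes it below -/
import Mathlib

section
/- Let 1 ≤ p < ∞. Then every bounded sequence in the Banach space ℓ_p has a weakly p-convergent subsequence (i.e., ℓ_p belongs to the class W_p) if and only if p ≥ 2. -/
open Filter Topology Bornology Pointwise
open scoped ENNReal NNReal

noncomputable section

/-- A real sequence belongs to `ℓ_p` when `p ≠ ∞`, and to `c₀` when `p = ∞`. -/
def InLpC0 (p : ℝ≥0∞) (f : ℕ → ℝ) : Prop :=
  (p ≠ ∞ ∧ Memℓp f p) ∨ (p = ∞ ∧ Tendsto f atTop (nhds (0 : ℝ)))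

/-- An `ℝ≥0∞`-valued sequence belongs to `ℓ_q` (i.e. `∑ (f n) ^ q < ∞`) when `q ≠ ∞`,
and to `c₀` when `q = ∞`. -/
def InLpC0E (q : ℝ≥0∞) (f : ℕ → ℝ≥0∞) : Prop :=
  (q ≠ ∞ ∧ (∑' n, f n ^ q.toReal) ≠ ∞) ∨ (q = ∞ ∧ Tendsto f atTop (nhds (0 : ℝ≥0∞)))

variable {E : Type*} [AddCommGroup E] [Module ℝ E] [TopologicalSpace E]

/-- A sequence `x` in a topological vector space `E` is weakly `p`-summable if
`(χ (x n))ₙ ∈ ℓ_p` (resp. `∈ c₀` if `p = ∞`) for every continuous linear functional `χ` on `E`. -/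
def WeaklySummable (p : ℝ≥0∞) (x : ℕ → E) : Prop :=
  ∀ χ : E →L[ℝ] ℝ, InLpC0 p fun n => χ (x n)

/-- `A ⊆ E` is a `(p,q)`-`(V*)` set: for every weakly `p`-summable sequence `(χ n)` in the
strong dual `E'_β` (the default topology on `E →L[ℝ] ℝ` is the strong topology), the sequence
`(sup_{a ∈ A} |χ n a|)ₙ` belongs to `ℓ_q` (to `c₀` if `q = ∞`). -/
def IsVAstSet (p q : ℝ≥0∞) (A : Set E) : Prop :=
  ∀ χ : ℕ → (E →L[ℝ] ℝ), WeaklySummable p χ →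
    InLpC0E q fun n => ⨆ a ∈ A, (‖χ n a‖₊ : ℝ≥0∞)

/-- `B ⊆ E'` is a `(p,q)`-`(V)` set: for every weakly `p`-summable sequence `(x n)` in `E`,
the sequence `(sup_{χ ∈ B} |χ (x n)|)ₙ` belongs to `ℓ_q` (to `c₀` if `q = ∞`). -/
def IsVSet (p q : ℝ≥0∞) (B : Set (E →L[ℝ] ℝ)) : Prop :=
  ∀ x : ℕ → E, WeaklySummable p x → InLpC0E q fun n => ⨆ χ ∈ B, (‖χ (x n)‖₊ : ℝ≥0∞)

/-- The `p`-Schur property: every weakly `p`-summable sequence converges to `0`. -/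
def HasPSchur (p : ℝ≥0∞) (F : Type*) [AddCommGroup F] [Module ℝ F] [TopologicalSpace F] : Prop :=
  ∀ x : ℕ → F, WeaklySummable p x → Tendsto x atTop (nhds 0)

/-- The identity map into `F` equipped with its weak topology. -/
def toWeakSp {F : Type*} [AddCommGroup F] [Module ℝ F] [TopologicalSpace F] (x : F) :
    WeakSpace ℝ F := x

/-- A set `A ⊆ F` viewed as a subset of `F` with its weak topology. -/
def inWeak {F : Type*} [AddCommGroup F] [Module ℝ F] [TopologicalSpace F] (A : Set F) :
    Set (WeakSpace ℝ F) := toWeakSp '' A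

section Helpers
variable (p : ℝ≥0∞) [Fact (1 ≤ p)]

lemma p_ne_zero : p ≠ 0 := (zero_lt_one.trans_le Fact.out).ne'

/-- coordinate functional on lp -/
def coordCLM (k : ℕ) : lp (fun _ : ℕ => ℝ) p →L[ℝ] ℝ :=
  LinearMap.mkContinuous
    { toFun := fun f => f k
      map_add' := fun f g => by simp [lp.coeFn_add]
      map_smul' := fun c f => by simp [lp.coeFn_smul] }
    1 (fun f => by
      show ‖f k‖ ≤ 1 * ‖f‖
      simpa using lp.norm_apply_le_norm (p_ne_zero p) f k)

@[simp] lemma coordCLM_apply (k : ℕ) (f : lp (fun _ : ℕ => ℝ) p) : coordCLM p k f = f k := rfl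

/-- χ on finite sums of singles -/
lemma chi_sum_single (χ : lp (fun _ : ℕ => ℝ) p →L[ℝ] ℝ) (v : ℕ → ℝ) (s : Finset ℕ) :
    χ (∑ i ∈ s, lp.single p i (v i)) = ∑ i ∈ s, v i * χ (lp.single p i 1) := by
  rw [map_sum]
  refine Finset.sum_congr rfl fun i _ => ?_
  have : lp.single p i (v i) = v i • (lp.single p i (1:ℝ) : lp (fun _ : ℕ => ℝ) p) := by
    have h := lp.single_smul (E := fun _ : ℕ => ℝ) (𝕜 := ℝ) p i (v i) (1:ℝ)
    rw [smul_eq_mul, mul_one] at h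
    exact h
  rw [this, map_smul, smul_eq_mul]

variable {p}

lemma sign_mul_self_eq_abs (c : ℝ) : Real.sign c * c = |c| := by
  rcases lt_trichotomy c 0 with h | h | h
  · rw [Real.sign_of_neg h, abs_of_neg h]; ring
  · simp [h]
  · rw [Real.sign_of_pos h, abs_of_pos h]; ring

lemma dual_finset_bound {qr : ℝ} (hpq : p.toReal.HolderConjugate qr)
    (χ : lp (fun _ : ℕ => ℝ) p →L[ℝ] ℝ) (s : Finset ℕ) :
    ∑ i ∈ s, |χ (lp.single p i 1)| ^ qr ≤ ‖χ‖ ^ qr := by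
  set pr := p.toReal with hprdef
  have hpr0 : 0 < pr := hpq.pos
  set c : ℕ → ℝ := fun i => χ (lp.single p i 1) with hc
  set w : ℕ → ℝ := fun i => |c i| ^ (qr - 1) * Real.sign (c i) with hw
  set T := ∑ i ∈ s, |c i| ^ qr with hT
  have hT0 : 0 ≤ T := Finset.sum_nonneg fun i _ => Real.rpow_nonneg (abs_nonneg _) _
  have hwc : ∀ i, w i * c i = |c i| ^ qr := by
    intro i
    have : w i * c i = |c i| ^ (qr - 1) * (Real.sign (c i) * c i) := by rw [hw]; ring
    rw [this, sign_mul_self_eq_abs]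
    by_cases h : c i = 0
    · simp [h, Real.zero_rpow hpq.symm.ne_zero,
        Real.zero_rpow (sub_ne_zero.2 hpq.symm.lt.ne')]
    · rw [← Real.rpow_add_one (abs_ne_zero.2 h), sub_add_cancel]
  have hwnorm : ∀ i, |w i| ^ pr = |c i| ^ qr := by
    intro i
    by_cases h : c i = 0
    · simp [hw, h, Real.zero_rpow (sub_ne_zero.2 hpq.symm.lt.ne'),
        Real.zero_rpow hpr0.ne', Real.zero_rpow hpq.symm.ne_zero]
    · have h1 : |w i| = |c i| ^ (qr - 1) := by
        rw [hw, abs_mul, Real.abs_rpow_of_nonneg (abs_nonneg _), abs_abs]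
        rcases lt_trichotomy (c i) 0 with hh | hh | hh
        · rw [Real.sign_of_neg hh]; simp
        · exact absurd hh h
        · rw [Real.sign_of_pos hh]; simp
      rw [h1, ← Real.rpow_mul (abs_nonneg _), hpq.symm.sub_one_mul_conj]
  have hgnorm : ‖(∑ i ∈ s, lp.single p i (w i) : lp (fun _ : ℕ => ℝ) p)‖ ^ pr = T := by
    rw [lp.norm_sum_single hpr0, hT]
    exact Finset.sum_congr rfl fun i _ => by rw [Real.norm_eq_abs, hwnorm]
  have hχg : χ (∑ i ∈ s, lp.single p i (w i)) = T := by
    rw [chi_sum_single, hT]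
    exact Finset.sum_congr rfl fun i _ => hwc i
  have hTle : T ≤ ‖χ‖ * T ^ pr⁻¹ := by
    calc T = χ (∑ i ∈ s, lp.single p i (w i)) := hχg.symm
    _ ≤ |χ (∑ i ∈ s, lp.single p i (w i))| := le_abs_self _
    _ ≤ ‖χ‖ * ‖(∑ i ∈ s, lp.single p i (w i) : lp (fun _ : ℕ => ℝ) p)‖ := χ.le_opNorm _
    _ = ‖χ‖ * T ^ pr⁻¹ := by
        rw [← hgnorm, Real.rpow_rpow_inv (norm_nonneg _) hpr0.ne']
  rcases hT0.eq_or_lt with h0 | h0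
  · rw [← h0]; exact Real.rpow_nonneg (norm_nonneg _) _
  · have hdiv : T ^ qr⁻¹ ≤ ‖χ‖ := by
      have hTp : 0 < T ^ pr⁻¹ := Real.rpow_pos_of_pos h0 _
      have h2 : T / T ^ pr⁻¹ ≤ ‖χ‖ := (div_le_iff₀ hTp).2 hTle
      have h3 : T / T ^ pr⁻¹ = T ^ qr⁻¹ := by
        have he : qr⁻¹ = 1 - pr⁻¹ := by
          have := hpq.inv_add_inv_eq_one
          linarith
        rw [he, Real.rpow_sub h0, Real.rpow_one]
      rwa [h3] at h2
    calc T = (T ^ qr⁻¹) ^ qr := (Real.rpow_inv_rpow hT0 hpq.symm.ne_zero).symm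
    _ ≤ ‖χ‖ ^ qr := Real.rpow_le_rpow (Real.rpow_nonneg hT0 _) hdiv hpq.symm.nonneg

lemma abs_apply_le_norm (f : lp (fun _ : ℕ => ℝ) p) (k : ℕ) : |f k| ≤ ‖f‖ := by
  simpa using lp.norm_apply_le_norm (p_ne_zero p) f k

lemma exists_subseq_coord_tendsto (u : ℕ → lp (fun _ : ℕ => ℝ) p)
    (C : ℝ) (hC : ∀ n, ‖u n‖ ≤ C) :
    ∃ (y : lp (fun _ : ℕ => ℝ) p) (φ : ℕ → ℕ), StrictMono φ ∧
      ∀ k, Tendsto (fun n => u (φ n) k - y k) atTop (𝓝 0) := by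
  set K : Set (ℕ → ℝ) := Set.univ.pi fun _ => Set.Icc (-C) C with hK
  have hKc : IsCompact K := isCompact_univ_pi fun _ => isCompact_Icc
  have hmem : ∀ n, (⇑(u n) : ℕ → ℝ) ∈ K := by
    intro n
    rw [hK, Set.mem_univ_pi]
    intro k
    exact Set.mem_Icc.2 (abs_le.1 ((abs_apply_le_norm (u n) k).trans (hC n)))
  obtain ⟨a, -, φ, hφ, hconv⟩ := hKc.tendsto_subseq hmem
  have hconv' : Tendsto (fun n => (⇑(u (φ n)) : ℕ → ℝ)) atTop (𝓝 a) := hconv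
  have hcoord : ∀ k, Tendsto (fun n => u (φ n) k) atTop (𝓝 (a k)) := by
    intro k
    exact (tendsto_pi_nhds.1 hconv' k)
  have hbdd : Bornology.IsBounded (Set.range fun n => u (φ n)) := by
    refine (isBounded_iff_forall_norm_le).2 ⟨C, ?_⟩
    rintro _ ⟨n, rfl⟩
    exact hC _
  have hmemℓp : Memℓp a p := lp.memℓp_of_tendsto hbdd hconv'
  refine ⟨⟨a, hmemℓp⟩, φ, hφ, fun k => ?_⟩
  simpa using (hcoord k).sub_const (a k)

lemma glide (hp2 : p ≠ ∞) (x : ℕ → lp (fun _ : ℕ => ℝ) p)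
    (hx : ∀ k, Tendsto (fun n => x n k) atTop (𝓝 0)) :
    ∃ (ψ b : ℕ → ℕ), StrictMono ψ ∧ StrictMono b ∧ b 0 = 0 ∧
      ∀ j, (∑ i ∈ Finset.range (b j), ‖x (ψ j) i‖ ^ p.toReal ≤ (1/2:ℝ)^j) ∧
        ‖x (ψ j) - ∑ i ∈ Finset.range (b (j+1)), lp.single p i (x (ψ j) i)‖ ^ p.toReal
          ≤ (1/2:ℝ)^j := by
  have hpr0 : 0 < p.toReal := ENNReal.toReal_pos (p_ne_zero p) hp2
  have step : ∀ n₀ M₀ j : ℕ, ∃ nM : ℕ × ℕ, n₀ < nM.1 ∧ M₀ < nM.2 ∧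
      (∑ i ∈ Finset.range M₀, ‖x nM.1 i‖ ^ p.toReal ≤ (1/2:ℝ)^j) ∧
      ‖x nM.1 - ∑ i ∈ Finset.range nM.2, lp.single p i (x nM.1 i)‖ ^ p.toReal ≤ (1/2:ℝ)^j := by
    intro n₀ M₀ j
    have hδ : (0:ℝ) < (1/2:ℝ)^j := by positivity
    -- find n
    have hhead : Tendsto (fun n => ∑ i ∈ Finset.range M₀, ‖x n i‖ ^ p.toReal) atTop (𝓝 0) := by
      have : ∀ i ∈ Finset.range M₀,
          Tendsto (fun n => ‖x n i‖ ^ p.toReal) atTop (𝓝 0) := by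
        intro i _
        have h1 : Tendsto (fun n => ‖x n i‖) atTop (𝓝 0) := by
          simpa using (hx i).norm
        have := h1.rpow_const (Or.inr hpr0.le)
        simpa [Real.zero_rpow hpr0.ne'] using this
      simpa using tendsto_finset_sum _ this
    obtain ⟨n, hnh, hn₀⟩ := ((hhead.eventually (eventually_le_nhds hδ)).and
      (eventually_gt_atTop n₀)).exists
    -- find M
    have htail : Tendsto (fun M => ‖x n - ∑ i ∈ Finset.range M, lp.single p i (x n i)‖ ^ p.toReal)
        atTop (𝓝 0) := by
      have hs := (lp.hasSum_norm hpr0 (x n)).tendsto_sum_nat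
      have : Tendsto (fun M => ‖x n‖ ^ p.toReal
          - ∑ i ∈ Finset.range M, ‖x n i‖ ^ p.toReal) atTop (𝓝 0) := by
        simpa using (tendsto_const_nhds (x := ‖x n‖ ^ p.toReal)).sub hs
      refine this.congr fun M => ?_
      rw [lp.norm_compl_sum_single hpr0]
    obtain ⟨M, hMt, hM₀⟩ := ((htail.eventually (eventually_le_nhds hδ)).and
      (eventually_gt_atTop M₀)).exists
    exact ⟨(n, M), hn₀, hM₀, hnh, hMt⟩
  choose F h1 h2 h3 h4 using step
  set g : ℕ → ℕ × ℕ := fun j => Nat.rec (F 0 0 0) (fun j prev => F prev.1 prev.2 (j+1)) j with hg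
  have hgs : ∀ j, g (j+1) = F (g j).1 (g j).2 (j+1) := fun j => rfl
  set ψ : ℕ → ℕ := fun j => (g j).1 with hψ
  set b : ℕ → ℕ := fun j => Nat.rec 0 (fun j _ => (g j).2) j with hb
  have hbs : ∀ j, b (j+1) = (g j).2 := fun j => rfl
  refine ⟨ψ, b, ?_, ?_, rfl, ?_⟩
  · apply strictMono_nat_of_lt_succ
    intro j
    show (g j).1 < (g (j+1)).1
    rw [hgs j]
    exact h1 _ _ _
  · apply strictMono_nat_of_lt_succ
    intro j
    cases j with
    | zero => exact h2 0 0 0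
    | succ j =>
      rw [hbs j, hbs (j+1), hgs j]
      exact h2 _ _ _
  · intro j
    cases j with
    | zero => exact ⟨h3 0 0 0, h4 0 0 0⟩
    | succ j =>
      constructor
      · simpa only [hψ, hbs j, hgs j] using h3 (g j).1 (g j).2 (j+1)
      · simpa only [hψ, hbs (j+1), hgs j] using h4 (g j).1 (g j).2 (j+1)

lemma forward_main (hp2 : p ≠ ∞) (hpr2 : 2 ≤ p.toReal)
    (x : ℕ → lp (fun _ : ℕ => ℝ) p) (C : ℝ) (hC : ∀ n, ‖x n‖ ≤ C)
    (hx : ∀ k, Tendsto (fun n => x n k) atTop (𝓝 0)) :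
    ∃ ψ : ℕ → ℕ, StrictMono ψ ∧ ∀ χ : lp (fun _ : ℕ => ℝ) p →L[ℝ] ℝ,
      Memℓp (fun n => χ (x (ψ n))) p := by
  set pr := p.toReal with hprdef
  have hpr1 : 1 < pr := lt_of_lt_of_le one_lt_two hpr2
  have hpr0 : 0 < pr := lt_trans zero_lt_one hpr1
  have hC0 : 0 ≤ C := le_trans (norm_nonneg _) (hC 0)
  set qr := pr.conjExponent with hqrdef
  have hpq : pr.HolderConjugate qr := Real.HolderConjugate.conjExponent hpr1
  have hqr0 : 0 < qr := hpq.symm.pos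
  have hqr_le_pr : qr ≤ pr := by
    rw [hqrdef, Real.conjExponent]
    exact div_le_self hpr0.le (by linarith)
  obtain ⟨ψ, b, hψ, hb, hb0, hbounds⟩ := glide hp2 x hx
  set P : ℕ → ℕ → lp (fun _ : ℕ => ℝ) p :=
    fun j M => ∑ i ∈ Finset.range M, lp.single p i (x (ψ j) i) with hP
  set h : ℕ → lp (fun _ : ℕ => ℝ) p :=
    fun j => ∑ i ∈ Finset.Ico (b j) (b (j+1)), lp.single p i (x (ψ j) i) with hh
  have hsplit : ∀ j, P j (b j) + h j = P j (b (j+1)) := by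
    intro j
    rw [hP, hh]
    simp only [Finset.range_eq_Ico]
    exact Finset.sum_Ico_consecutive _ (Nat.zero_le _) (hb (Nat.lt_succ_self j)).le
  set r : ℝ := (1/2:ℝ) ^ (pr⁻¹) with hr
  have hr0 : 0 ≤ r := Real.rpow_nonneg (by norm_num) _
  have hr1 : r < 1 := Real.rpow_lt_one (by norm_num) (by norm_num) (by positivity)
  have hrho : ∀ j : ℕ, ((1/2:ℝ)^j) ^ pr⁻¹ = r ^ j := by
    intro j
    rw [← Real.rpow_natCast (1/2:ℝ) j, ← Real.rpow_mul (by norm_num), mul_comm,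
      Real.rpow_mul (by norm_num), Real.rpow_natCast]
  have hrpow : ∀ (a : ℝ) (j : ℕ), 0 ≤ a → a ^ pr ≤ (1/2:ℝ)^j → a ≤ r ^ j := by
    intro a j ha hle
    calc a = (a ^ pr) ^ pr⁻¹ := (Real.rpow_rpow_inv ha hpr0.ne').symm
    _ ≤ ((1/2:ℝ)^j) ^ pr⁻¹ :=
        Real.rpow_le_rpow (Real.rpow_nonneg ha _) hle (by positivity)
    _ = r ^ j := hrho j
  have ht_bound : ∀ j, ‖x (ψ j) - h j‖ ≤ 2 * r ^ j := by
    intro j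
    have e1 : x (ψ j) - h j = (x (ψ j) - P j (b (j+1))) + P j (b j) := by
      rw [← hsplit j]; abel
    have b1 : ‖x (ψ j) - P j (b (j+1))‖ ≤ r ^ j :=
      hrpow _ j (norm_nonneg _) (hbounds j).2
    have b2 : ‖P j (b j)‖ ≤ r ^ j := by
      refine hrpow _ j (norm_nonneg _) ?_
      rw [hP, lp.norm_sum_single hpr0]
      exact (hbounds j).1
    calc ‖x (ψ j) - h j‖ ≤ ‖x (ψ j) - P j (b (j+1))‖ + ‖P j (b j)‖ := by
          rw [e1]; exact norm_add_le _ _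
    _ ≤ r ^ j + r ^ j := add_le_add b1 b2
    _ = 2 * r ^ j := by ring
  refine ⟨ψ, hψ, fun χ => ?_⟩
  set c : ℕ → ℝ := fun i => χ (lp.single p i 1) with hc
  set s : ℕ → ℝ := fun j => ∑ i ∈ Finset.Ico (b j) (b (j+1)), |c i| ^ qr with hs
  have hs0 : ∀ j, 0 ≤ s j :=
    fun j => Finset.sum_nonneg fun i _ => Real.rpow_nonneg (abs_nonneg _) _
  -- partial sums of s are bounded
  have hs_partial : ∀ N, ∑ j ∈ Finset.range N, s j = ∑ i ∈ Finset.Ico 0 (b N), |c i| ^ qr := by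
    intro N
    induction N with
    | zero => simp [hb0]
    | succ N ih =>
      rw [Finset.sum_range_succ, ih, hs, ← hb0]
      rw [Finset.sum_Ico_consecutive _ (by rw [hb0]; exact Nat.zero_le _)
        (hb (Nat.lt_succ_self N)).le]
  have hs_summable : Summable s :=
    summable_of_sum_range_le hs0 fun N => by
      rw [hs_partial N]; exact dual_finset_bound hpq χ _
  -- the h-part
  have hf1_bound : ∀ j, |χ (h j)| ≤ C * (s j) ^ qr⁻¹ := by
    intro j
    rw [hh, chi_sum_single]
    calc |∑ i ∈ Finset.Ico (b j) (b (j+1)), x (ψ j) i * c i|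
        ≤ ∑ i ∈ Finset.Ico (b j) (b (j+1)), |x (ψ j) i| * |c i| := by
          refine (Finset.abs_sum_le_sum_abs _ _).trans ?_
          exact le_of_eq (Finset.sum_congr rfl fun i _ => abs_mul _ _)
    _ ≤ (∑ i ∈ Finset.Ico (b j) (b (j+1)), |x (ψ j) i| ^ pr) ^ (1/pr) *
          (∑ i ∈ Finset.Ico (b j) (b (j+1)), |c i| ^ qr) ^ (1/qr) := by
          have := Real.inner_le_Lp_mul_Lq (s := Finset.Ico (b j) (b (j+1)))
            (f := fun i => |x (ψ j) i|) (g := fun i => |c i|) hpq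
          simpa [abs_abs] using this
    _ ≤ C * (s j) ^ qr⁻¹ := by
          rw [one_div, one_div]
          refine mul_le_mul ?_ le_rfl (Real.rpow_nonneg (hs0 j) _) hC0
          have h1 : ∑ i ∈ Finset.Ico (b j) (b (j+1)), |x (ψ j) i| ^ pr ≤ ‖x (ψ j)‖ ^ pr := by
            have := lp.sum_rpow_le_norm_rpow hpr0 (x (ψ j)) (Finset.Ico (b j) (b (j+1)))
            simpa using this
          calc (∑ i ∈ Finset.Ico (b j) (b (j+1)), |x (ψ j) i| ^ pr) ^ pr⁻¹
              ≤ (‖x (ψ j)‖ ^ pr) ^ pr⁻¹ := by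
                apply Real.rpow_le_rpow (Finset.sum_nonneg fun i _ =>
                  Real.rpow_nonneg (abs_nonneg _) _) h1 (by positivity)
          _ = ‖x (ψ j)‖ := Real.rpow_rpow_inv (norm_nonneg _) hpr0.ne'
          _ ≤ C := hC _
  have hf1 : Memℓp (fun j => χ (h j)) (ENNReal.ofReal qr) := by
    apply memℓp_gen
    rw [ENNReal.toReal_ofReal hqr0.le]
    have hle : ∀ j, ‖χ (h j)‖ ^ qr ≤ C ^ qr * s j := by
      intro j
      rw [Real.norm_eq_abs]
      calc |χ (h j)| ^ qr ≤ (C * (s j) ^ qr⁻¹) ^ qr :=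
            Real.rpow_le_rpow (abs_nonneg _) (hf1_bound j) hqr0.le
      _ = C ^ qr * s j := by
            rw [Real.mul_rpow hC0 (Real.rpow_nonneg (hs0 j) _),
              Real.rpow_inv_rpow (hs0 j) hqr0.ne']
    exact Summable.of_nonneg_of_le (fun j => Real.rpow_nonneg (norm_nonneg _) _) hle
      (hs_summable.mul_left _)
  -- the t-part
  have hf2 : Memℓp (fun j => χ (x (ψ j) - h j)) 1 := by
    apply memℓp_gen
    have : (1:ℝ≥0∞).toReal = 1 := by simp
    rw [this]
    have hle : ∀ j, ‖χ (x (ψ j) - h j)‖ ^ (1:ℝ) ≤ (‖χ‖ * 2) * r ^ j := by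
      intro j
      rw [Real.rpow_one]
      calc ‖χ (x (ψ j) - h j)‖ ≤ ‖χ‖ * ‖x (ψ j) - h j‖ := χ.le_opNorm _
      _ ≤ ‖χ‖ * (2 * r ^ j) := by
            exact mul_le_mul_of_nonneg_left (ht_bound j) (norm_nonneg _)
      _ = (‖χ‖ * 2) * r ^ j := by ring
    exact Summable.of_nonneg_of_le (fun j => Real.rpow_nonneg (norm_nonneg _) _) hle
      ((summable_geometric_of_lt_one hr0 hr1).mul_left _)
  -- combine
  have hqe_le : ENNReal.ofReal qr ≤ p := by
    calc ENNReal.ofReal qr ≤ ENNReal.ofReal pr := ENNReal.ofReal_le_ofReal hqr_le_pr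
    _ = p := ENNReal.ofReal_toReal hp2
  have heq : (fun j => χ (x (ψ j))) =
      (fun j => χ (h j)) + fun j => χ (x (ψ j) - h j) := by
    funext j
    simp only [Pi.add_apply]
    rw [← map_add]
    congr 1
    abel
  rw [heq]
  exact (hf1.of_exponent_ge hqe_le).add (hf2.of_exponent_ge Fact.out)

end Helpers

section MainProof
variable (p : ℝ≥0∞) [Fact (1 ≤ p)]

lemma pairing_exists (c : ℕ → ℝ) (K : ℝ)
    (hsum : ∀ x : lp (fun _ : ℕ => ℝ) p, Summable fun i => |c i * x i|)
    (hK : ∀ x : lp (fun _ : ℕ => ℝ) p, ∑' i, |c i * x i| ≤ K * ‖x‖) :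
    ∃ χ : lp (fun _ : ℕ => ℝ) p →L[ℝ] ℝ, ∀ x, χ x = ∑' i, c i * x i := by
  have hsum' : ∀ x : lp (fun _ : ℕ => ℝ) p, Summable fun i => c i * x i :=
    fun x => (hsum x).of_abs
  refine ⟨LinearMap.mkContinuous
    { toFun := fun x => ∑' i, c i * x i
      map_add' := fun x z => by
        have h : ∀ i, c i * (x + z) i = c i * x i + c i * z i := fun i => by
          rw [lp.coeFn_add]; simp [mul_add]
        dsimp only
        rw [tsum_congr h, Summable.tsum_add (hsum' x) (hsum' z)]
      map_smul' := fun r x => by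
        have h : ∀ i, c i * (r • x) i = r * (c i * x i) := fun i => by
          rw [lp.coeFn_smul]; simp only [Pi.smul_apply, smul_eq_mul]; ring
        dsimp only
        rw [tsum_congr h, tsum_mul_left]
        simp }
    K (fun x => by
      refine le_trans ?_ (hK x)
      have hn := norm_tsum_le_tsum_norm (f := fun i => c i * x i)
        (by simpa only [Real.norm_eq_abs] using hsum x)
      simpa [Real.norm_eq_abs, abs_mul] using hn), fun x => rfl⟩

variable {p}

lemma forward_dir (hp2 : p ≠ ∞) (hp : 2 ≤ p)
    (u : ℕ → lp (fun _ : ℕ => ℝ) p) (hbdd : ∃ C : ℝ, ∀ n, ‖u n‖ ≤ C) :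
    ∃ (y : lp (fun _ : ℕ => ℝ) p) (φ : ℕ → ℕ), StrictMono φ ∧
      WeaklySummable p fun n => u (φ n) - y := by
  obtain ⟨C, hC⟩ := hbdd
  obtain ⟨y, φ₀, hφ₀, hcoord⟩ := exists_subseq_coord_tendsto u C hC
  set x : ℕ → lp (fun _ : ℕ => ℝ) p := fun n => u (φ₀ n) - y with hx
  have hxc : ∀ k, Tendsto (fun n => x n k) atTop (𝓝 0) := by
    intro k
    refine (hcoord k).congr fun n => ?_
    rw [hx]
    simp [lp.coeFn_sub]
  have hxb : ∀ n, ‖x n‖ ≤ C + ‖y‖ := fun n =>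
    (norm_sub_le _ _).trans (add_le_add (hC _) le_rfl)
  have hpr2 : 2 ≤ p.toReal := by
    have h := ENNReal.toReal_mono hp2 hp
    simpa using h
  obtain ⟨ψ, hψ, hmem⟩ := forward_main hp2 hpr2 x (C + ‖y‖) hxb hxc
  exact ⟨y, φ₀ ∘ ψ, hφ₀.comp hψ, fun χ => Or.inl ⟨hp2, hmem χ⟩⟩

lemma converse_dir (hp2 : p ≠ ∞)
    (H : ∀ u : ℕ → lp (fun _ : ℕ => ℝ) p, (∃ C : ℝ, ∀ n, ‖u n‖ ≤ C) →
      ∃ (y : lp (fun _ : ℕ => ℝ) p) (φ : ℕ → ℕ), StrictMono φ ∧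
        WeaklySummable p fun n => u (φ n) - y) : 2 ≤ p := by
  by_contra hcon
  have hplt : p < 2 := not_le.mp hcon
  set pr := p.toReal with hprdef
  have hpr1 : 1 ≤ pr := by
    have h := ENNReal.toReal_mono hp2 (Fact.out : 1 ≤ p)
    simpa using h
  have hpr0 : 0 < pr := lt_of_lt_of_le zero_lt_one hpr1
  have hprlt : pr < 2 := by
    have h := (ENNReal.toReal_lt_toReal hp2 (by norm_num : (2:ℝ≥0∞) ≠ ∞)).2 hplt
    simpa using h
  set u : ℕ → lp (fun _ : ℕ => ℝ) p := fun n => lp.single p n (1:ℝ) with hu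
  have hU : ∀ n, ‖u n‖ = 1 := by
    intro n
    rw [hu]
    simpa using lp.norm_single (E := fun _ : ℕ => ℝ) (zero_lt_one.trans_le Fact.out) n (1:ℝ)
  obtain ⟨y, φ, hφ, hw⟩ := H u ⟨1, fun n => le_of_eq (hU n)⟩
  -- u (φ n) vanishes at coordinate k when k ≠ φ n
  have husing : ∀ n k, k ≠ φ n → u (φ n) k = 0 := fun n k hk =>
    lp.single_apply_ne p (φ n) _ hk
  -- y = 0
  have hyk : ∀ k, y k = 0 := by
    intro k
    rcases hw (coordCLM p k) with ⟨-, h1⟩ | ⟨hinf, -⟩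
    swap
    · exact absurd hinf hp2
    have h2 : Summable fun n => ‖(u (φ n) - y) k‖ ^ pr := h1.summable hpr0
    have h3 : Tendsto (fun n => ‖(u (φ n) - y) k‖ ^ pr) atTop (𝓝 0) :=
      h2.tendsto_atTop_zero
    have h4 : (fun n => ‖(u (φ n) - y) k‖ ^ pr) =ᶠ[atTop]
        fun _ => ‖y k‖ ^ pr := by
      filter_upwards [eventually_gt_atTop k] with n hn
      have hk : k ≠ φ n := (lt_of_lt_of_le hn hφ.le_apply).ne
      have : (u (φ n) - y) k = - y k := by
        rw [lp.coeFn_sub, Pi.sub_apply, husing n k hk, zero_sub]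
      rw [this, norm_neg]
    have h5 : Tendsto (fun _ : ℕ => ‖y k‖ ^ pr) atTop (𝓝 0) := h3.congr' h4
    have h6 : ‖y k‖ ^ pr = 0 := tendsto_nhds_unique tendsto_const_nhds h5
    have h7 : ‖y k‖ = 0 := by
      by_contra h7
      exact h7 ((Real.rpow_eq_zero (norm_nonneg _) hpr0.ne').1 h6)
    simpa using h7
  have hy0 : y = 0 := by
    apply lp.ext
    funext k
    rw [lp.coeFn_zero]
    simpa using hyk k
  -- build the sequence a and functional χ depending on whether pr = 1 or pr > 1
  have key : ∃ (a : ℕ → ℝ) (χ : lp (fun _ : ℕ => ℝ) p →L[ℝ] ℝ),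
      (¬ Summable fun n => ‖a n‖ ^ pr) ∧ ∀ n, χ (u (φ n)) = a n := by
    classical
    rcases eq_or_lt_of_le hpr1 with hpr_eq | hpr_gt
    · -- case pr = 1
      have hpr_eq' : p.toReal = 1 := by rw [← hprdef, ← hpr_eq]
      set a : ℕ → ℝ := fun _ => 1 with hadef
      set c : ℕ → ℝ := fun i => if h : ∃ n, φ n = i then (1:ℝ) else 0 with hcdef
      have hcφ : ∀ n, c (φ n) = 1 := fun n => dif_pos ⟨n, rfl⟩
      have hcabs : ∀ i, |c i| ≤ 1 := by
        intro i
        rw [hcdef]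
        dsimp only
        by_cases h : ∃ n, φ n = i
        · rw [dif_pos h]; norm_num
        · rw [dif_neg h]; norm_num
      have hxsum : ∀ x : lp (fun _ : ℕ => ℝ) p, Summable fun i => |x i| := by
        intro x
        have h1 := (lp.memℓp x).summable hpr0
        refine h1.congr fun i => ?_
        rw [hpr_eq', Real.rpow_one, Real.norm_eq_abs]
      have hsum : ∀ x : lp (fun _ : ℕ => ℝ) p, Summable fun i => |c i * x i| := by
        intro x
        refine Summable.of_nonneg_of_le (fun i => abs_nonneg _) (fun i => ?_) (hxsum x)
        rw [abs_mul]
        calc |c i| * |x i| ≤ 1 * |x i| :=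
              mul_le_mul_of_nonneg_right (hcabs i) (abs_nonneg _)
        _ = |x i| := one_mul _
      have hK : ∀ x : lp (fun _ : ℕ => ℝ) p, ∑' i, |c i * x i| ≤ 1 * ‖x‖ := by
        intro x
        rw [one_mul]
        have hnx : ‖x‖ = ∑' i, |x i| := by
          rw [lp.norm_eq_tsum_rpow hpr0 x, hpr_eq']
          simp [Real.rpow_one, Real.norm_eq_abs]
        rw [hnx]
        refine Summable.tsum_le_tsum (fun i => ?_) (hsum x) (hxsum x)
        rw [abs_mul]
        calc |c i| * |x i| ≤ 1 * |x i| :=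
              mul_le_mul_of_nonneg_right (hcabs i) (abs_nonneg _)
        _ = |x i| := one_mul _
      obtain ⟨χ, hχ⟩ := pairing_exists p c 1 hsum hK
      refine ⟨a, χ, ?_, ?_⟩
      · intro hs
        have hs' : Summable (fun _ : ℕ => (1:ℝ)) := by
          refine hs.congr fun n => ?_
          rw [hadef]
          simp
        exact one_ne_zero
          (tendsto_nhds_unique tendsto_const_nhds hs'.tendsto_atTop_zero)
      · intro n
        rw [hχ, tsum_eq_single (φ n) ?_]
        · rw [hu]
          have : (lp.single p (φ n) (1:ℝ) : lp (fun _ : ℕ => ℝ) p) (φ n) = 1 :=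
            lp.single_apply_self (E := fun _ : ℕ => ℝ) p (φ n) (1:ℝ)
          rw [this, mul_one, hcφ, hadef]
        · intro i hi
          rw [husing n i hi, mul_zero]
    · -- case 1 < pr
      set qr := pr.conjExponent with hqrdef
      have hpq : pr.HolderConjugate qr := Real.HolderConjugate.conjExponent hpr_gt
      have hqr0 : 0 < qr := hpq.symm.pos
      have hqr_gt : pr < qr := by
        by_contra hle
        push_neg at hle
        have h1 : (pr - 1) * qr = pr := hpq.sub_one_mul_conj
        nlinarith
      set a : ℕ → ℝ := fun n => ((n:ℝ)+1) ^ (-pr⁻¹ : ℝ) with hadef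
      have hapos : ∀ n, 0 < a n := fun n => Real.rpow_pos_of_pos (by positivity) _
      have hapow : ∀ (n : ℕ) (e : ℝ), a n ^ e = ((n:ℝ)+1) ^ (-pr⁻¹ * e) := by
        intro n e
        rw [hadef]
        exact (Real.rpow_mul (by positivity) _ _).symm
      have hshift : ∀ e : ℝ, Summable (fun n : ℕ => ((n:ℝ)+1) ^ e) ↔ e < -1 := by
        intro e
        have h1 : (fun n : ℕ => ((n:ℝ)+1) ^ e) = fun n : ℕ => ((n+1 : ℕ) : ℝ) ^ e := by
          funext n
          push_cast
          ring_nf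
        rw [h1, summable_nat_add_iff (f := fun m : ℕ => (m:ℝ) ^ e) 1, Real.summable_nat_rpow]
      set c : ℕ → ℝ := fun i => if h : ∃ n, φ n = i then a h.choose else 0 with hcdef
      have hcφ : ∀ n, c (φ n) = a n := by
        intro n
        have h : ∃ m, φ m = φ n := ⟨n, rfl⟩
        have h2 : h.choose = n := hφ.injective h.choose_spec
        rw [hcdef]
        dsimp only
        rw [dif_pos h, h2]
      have hcz : ∀ i ∉ Set.range φ, c i = 0 := by
        intro i hi
        rw [hcdef]
        dsimp only
        rw [dif_neg]
        rintro ⟨n, rfl⟩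
        exact hi ⟨n, rfl⟩
      have hexp : -pr⁻¹ * qr < -1 := by
        have h1 : 1 < qr / pr := (one_lt_div hpr0).2 hqr_gt
        rw [div_eq_inv_mul] at h1
        linarith
      have hcq : Summable fun i => |c i| ^ qr := by
        have hfc : ∀ i, i ∉ Set.range φ → |c i| ^ qr = 0 := fun i hi => by
          rw [hcz i hi, abs_zero, Real.zero_rpow hpq.symm.ne_zero]
        refine (hφ.injective.summable_iff hfc).1 ?_
        have heq : ((fun i => |c i| ^ qr) ∘ φ) = fun n : ℕ => ((n:ℝ)+1) ^ (-pr⁻¹ * qr) := by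
          funext n
          simp only [Function.comp_apply]
          rw [hcφ n, abs_of_pos (hapos n), hapow]
        rw [heq]
        exact (hshift _).2 hexp
      have hxsum : ∀ x : lp (fun _ : ℕ => ℝ) p, Summable fun i => |x i| ^ pr := by
        intro x
        refine ((lp.memℓp x).summable hpr0).congr fun i => ?_
        rw [Real.norm_eq_abs]
      set K : ℝ := (∑' i, |c i| ^ qr) ^ (1/qr : ℝ) with hKdef
      have hHolder : ∀ x : lp (fun _ : ℕ => ℝ) p,
          (Summable fun i => |c i| * |x i|) ∧ ∑' i, |c i| * |x i| ≤ K * ‖x‖ := by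
        intro x
        obtain ⟨h1, h2⟩ := Real.summable_and_inner_le_Lp_mul_Lq_tsum_of_nonneg hpq.symm
          (fun i => abs_nonneg (c i)) (fun i => abs_nonneg (x i)) hcq (hxsum x)
        refine ⟨h1, h2.trans ?_⟩
        have hnx : (∑' i, |x i| ^ pr) ^ (1/pr : ℝ) = ‖x‖ := by
          rw [lp.norm_eq_tsum_rpow hpr0 x]
          congr 1
        rw [hnx, hKdef]
      have hsum : ∀ x : lp (fun _ : ℕ => ℝ) p, Summable fun i => |c i * x i| := by
        intro x
        refine ((hHolder x).1).congr fun i => ?_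
        rw [abs_mul]
      have hK : ∀ x : lp (fun _ : ℕ => ℝ) p, ∑' i, |c i * x i| ≤ K * ‖x‖ := by
        intro x
        refine le_trans (le_of_eq ?_) (hHolder x).2
        exact tsum_congr fun i => by rw [abs_mul]
      obtain ⟨χ, hχ⟩ := pairing_exists p c K hsum hK
      refine ⟨a, χ, ?_, ?_⟩
      · intro hs
        have heq : (fun n : ℕ => ‖a n‖ ^ pr) = fun n : ℕ => ((n:ℝ)+1) ^ (-1 : ℝ) := by
          funext n
          rw [Real.norm_eq_abs, abs_of_pos (hapos n), hapow, neg_mul,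
            inv_mul_cancel₀ hpr0.ne']
        rw [heq] at hs
        have := (hshift _).1 hs
        norm_num at this
      · intro n
        rw [hχ, tsum_eq_single (φ n) ?_]
        · rw [hu]
          have : (lp.single p (φ n) (1:ℝ) : lp (fun _ : ℕ => ℝ) p) (φ n) = 1 :=
            lp.single_apply_self (E := fun _ : ℕ => ℝ) p (φ n) (1:ℝ)
          rw [this, mul_one, hcφ]
        · intro i hi
          rw [husing n i hi, mul_zero]
  obtain ⟨a, χ, hnsum, hval⟩ := key
  rcases hw χ with ⟨-, h1⟩ | ⟨hinf, -⟩
  swap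
  · exact absurd hinf hp2
  have h2 : Summable fun n => ‖χ (u (φ n) - y)‖ ^ pr := h1.summable hpr0
  refine hnsum (h2.congr fun n => ?_)
  rw [hy0, sub_zero, hval n]

end MainProof

/-- Let `1 ≤ p < ∞`. Every bounded sequence in `ℓ_p` has a weakly `p`-convergent subsequence
(i.e. `ℓ_p` belongs to the class `W_p`) iff `p ≥ 2`. -/
theorem lp_in_Wp_iff (p : ℝ≥0∞) (hp1 : 1 ≤ p) (hp2 : p ≠ ∞) [Fact (1 ≤ p)] :
    (∀ u : ℕ → lp (fun _ : ℕ => ℝ) p, (∃ C : ℝ, ∀ n, ‖u n‖ ≤ C) →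
      ∃ (y : lp (fun _ : ℕ => ℝ) p) (φ : ℕ → ℕ), StrictMono φ ∧
        WeaklySummable p fun n => u (φ n) - y) ↔ 2 ≤ p := by
  constructor
  · exact fun H => converse_dir hp2 H
  · exact fun hp u hbdd => forward_dir hp2 hp u hbdd

end
end

section
/- Let E be a barrelled locally convex space. If E has the property sV* — every (V*) subset of E is relatively weakly sequentially compact — then E is weakly sequentially complete: every weakly Cauchy sequence in E converges in the weak topology of E. -/
open Filter Topology Bornology Pointwise
open scoped ENNReal NNReal

noncomputable section

variable {E : Type*} [AddCommGroup E] [Module ℝ E] [TopologicalSpace E]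

/-- Every natural number lies in a unique block `[N m, N (m+1))` when `N` is strictly
monotone with `N 0 = 0`. -/
lemma exists_block (N : ℕ → ℕ) (hmono : StrictMono N) (h0 : N 0 = 0) (n : ℕ) :
    ∃ m, N m ≤ n ∧ n < N (m + 1) := by
  classical
  refine ⟨Nat.findGreatest (fun m => N m ≤ n) n, ?_, ?_⟩
  · exact Nat.findGreatest_spec (P := fun m => N m ≤ n) (Nat.zero_le n)
      (le_of_eq_of_le h0 (Nat.zero_le n))
  · by_contra h
    push_neg at h
    have h1 : Nat.findGreatest (fun m => N m ≤ n) n + 1 ≤ n := le_trans hmono.le_apply h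
    have h2 : Nat.findGreatest (fun m => N m ≤ n) n + 1
        ≤ Nat.findGreatest (fun m => N m ≤ n) n :=
      Nat.le_findGreatest (P := fun m => N m ≤ n) h1 h
    omega

/-- Gliding hump / Schur-type lemma: a sequence of absolutely summable real sequences whose
pairings with every bounded sequence tend to zero cannot have ℓ¹-norms bounded below. -/
lemma schur_gliding (w : ℕ → ℕ → ℝ) (ε : ℝ) (hε : 0 < ε)
    (h1 : ∀ j, Summable fun n => |w j n|)
    (h2 : ∀ j, ε ≤ ∑' n, |w j n|)
    (h3 : ∀ ξ : ℕ → ℝ, (∀ n, |ξ n| ≤ 1) → Tendsto (fun j => ∑' n, ξ n * w j n) atTop (𝓝 0)) :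
    False := by
  have hcoord : ∀ n, Tendsto (fun j => w j n) atTop (𝓝 0) := by
    intro n
    have h := h3 (fun m => if m = n then 1 else 0)
      (by intro m; by_cases h : m = n <;> simp [h])
    have heq : ∀ j, (∑' m, (if m = n then (1:ℝ) else 0) * w j m) = w j n := by
      intro j
      rw [tsum_eq_single n]
      · simp
      · intro m hm; simp [hm]
    simpa only [heq] using h
  have hhead : ∀ N, Tendsto (fun j => ∑ n ∈ Finset.range N, |w j n|) atTop (𝓝 0) := by
    intro N
    have h : Tendsto (fun j => ∑ n ∈ Finset.range N, |w j n|) atTop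
        (𝓝 (∑ n ∈ Finset.range N, |(0:ℝ)|)) :=
      tendsto_finset_sum _ fun n _ => (hcoord n).abs
    simpa using h
  have step : ∀ (m N : ℕ), ∃ q : ℕ × ℕ, m ≤ q.1 ∧ N < q.2 ∧
      (∑ n ∈ Finset.range N, |w q.1 n|) < ε/8 ∧ (∑' n, |w q.1 (n + q.2)|) < ε/8 := by
    intro m N
    have h1' : ∀ᶠ j in atTop, (∑ n ∈ Finset.range N, |w j n|) < ε/8 :=
      (hhead N).eventually_lt_const (show (0:ℝ) < ε/8 by linarith)
    obtain ⟨J, hJm, hJh⟩ := ((eventually_ge_atTop m).and h1').exists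
    have h2' : Tendsto (fun i => ∑' n, |w J (n + i)|) atTop (𝓝 0) :=
      tendsto_sum_nat_add fun n => |w J n|
    obtain ⟨K, hKN, hKt⟩ :=
      ((eventually_gt_atTop N).and (h2'.eventually_lt_const (show (0:ℝ) < ε/8 by linarith))).exists
    exact ⟨(J, K), hJm, hKN, hJh, hKt⟩
  choose F hF1 hF2 hF3 hF4 using step
  let g : ℕ → ℕ × ℕ := fun m => Nat.rec ((0:ℕ), (0:ℕ)) (fun m p => F (m+1) p.2) m
  set J : ℕ → ℕ := fun m => (g m).1 with hJdef
  set N : ℕ → ℕ := fun m => (g m).2 with hNdef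
  have hg : ∀ m, g (m+1) = F (m+1) (N m) := fun m => rfl
  have hJ : ∀ m, m + 1 ≤ J (m+1) := fun m => by
    have := hF1 (m+1) (N m); rwa [← hg m] at this
  have hNlt : ∀ m, N m < N (m+1) := fun m => by
    have := hF2 (m+1) (N m); rwa [← hg m] at this
  have hNmono : StrictMono N := strictMono_nat_of_lt_succ hNlt
  have hN0 : N 0 = 0 := rfl
  have hhd : ∀ m, (∑ n ∈ Finset.range (N m), |w (J (m+1)) n|) < ε/8 := fun m => by
    have := hF3 (m+1) (N m); rwa [← hg m] at this
  have htl : ∀ m, (∑' n, |w (J (m+1)) (n + N (m+1))|) < ε/8 := fun m => by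
    have := hF4 (m+1) (N m); rwa [← hg m] at this
  -- the block index of n
  choose blk hblk1 hblk2 using exists_block N hNmono hN0
  have hblk_eq : ∀ m n, N m ≤ n → n < N (m+1) → blk n = m := by
    intro m n hmn hnm
    rcases lt_trichotomy (blk n) m with h | h | h
    · have : N (blk n + 1) ≤ N m := hNmono.monotone h
      have := hblk2 n
      omega
    · exact h
    · have : N (m + 1) ≤ N (blk n) := hNmono.monotone h
      have := hblk1 n
      omega
  set ξ : ℕ → ℝ := fun n => if 0 ≤ w (J (blk n + 1)) n then 1 else -1 with hξdef
  have hξ1 : ∀ n, |ξ n| ≤ 1 := by intro n; simp only [hξdef]; split <;> simp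
  -- key lower bound
  have hkey : ∀ m, ε/2 ≤ ∑' n, ξ n * w (J (m+1)) n := by
    intro m
    set j := J (m+1) with hj
    have hsumw : Summable fun n => |w j n| := h1 j
    have hsumf : Summable fun n => ξ n * w j n :=
      Summable.of_norm_bounded hsumw (fun n => by
        rw [norm_mul]
        calc ‖ξ n‖ * ‖w j n‖ ≤ 1 * ‖w j n‖ := by
              have := hξ1 n; rw [Real.norm_eq_abs]
              exact mul_le_mul_of_nonneg_right this (norm_nonneg _)
          _ = |w j n| := by rw [one_mul, Real.norm_eq_abs])
    -- split the total sum at N (m+1)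
    have hsplit : (∑ n ∈ Finset.range (N (m+1)), ξ n * w j n) + (∑' n, ξ (n + N (m+1)) * w j (n + N (m+1)))
        = ∑' n, ξ n * w j n := Summable.sum_add_tsum_nat_add (N (m+1)) hsumf
    have hsplitw : (∑ n ∈ Finset.range (N (m+1)), |w j n|) + (∑' n, |w j (n + N (m+1))|)
        = ∑' n, |w j n| := Summable.sum_add_tsum_nat_add (N (m+1)) hsumw
    -- tail bound
    have hsh : Summable fun n => |w j (n + N (m+1))| :=
      (summable_nat_add_iff (f := fun n => |w j n|) (N (m+1))).2 hsumw
    have hbnd : ∀ n, ‖ξ (n + N (m+1)) * w j (n + N (m+1))‖ ≤ |w j (n + N (m+1))| := by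
      intro n
      rw [Real.norm_eq_abs, abs_mul]
      exact mul_le_of_le_one_left (abs_nonneg _) (hξ1 _)
    have hsn : Summable fun n => ‖ξ (n + N (m+1)) * w j (n + N (m+1))‖ :=
      Summable.of_nonneg_of_le (fun n => norm_nonneg _) hbnd hsh
    have htail : |∑' n, ξ (n + N (m+1)) * w j (n + N (m+1))| ≤ ∑' n, |w j (n + N (m+1))| := by
      calc |∑' n, ξ (n + N (m+1)) * w j (n + N (m+1))|
          = ‖∑' n, ξ (n + N (m+1)) * w j (n + N (m+1))‖ := (Real.norm_eq_abs _).symm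
        _ ≤ ∑' n, ‖ξ (n + N (m+1)) * w j (n + N (m+1))‖ := norm_tsum_le_tsum_norm hsn
        _ ≤ ∑' n, |w j (n + N (m+1))| := Summable.tsum_le_tsum hbnd hsn hsh
    -- head split
    have hNle : N m ≤ N (m+1) := (hNlt m).le
    have hheadsplit : (∑ n ∈ Finset.range (N m), ξ n * w j n)
        + (∑ n ∈ Finset.Ico (N m) (N (m+1)), ξ n * w j n)
        = ∑ n ∈ Finset.range (N (m+1)), ξ n * w j n := by
      simp only [Finset.range_eq_Ico]
      exact Finset.sum_Ico_consecutive _ (Nat.zero_le _) hNle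
    have hheadsplitw : (∑ n ∈ Finset.range (N m), |w j n|)
        + (∑ n ∈ Finset.Ico (N m) (N (m+1)), |w j n|)
        = ∑ n ∈ Finset.range (N (m+1)), |w j n| := by
      simp only [Finset.range_eq_Ico]
      exact Finset.sum_Ico_consecutive _ (Nat.zero_le _) hNle
    -- on the block, ξ n * w j n = |w j n|
    have hblock : ∀ n ∈ Finset.Ico (N m) (N (m+1)), ξ n * w j n = |w j n| := by
      intro n hn
      rw [Finset.mem_Ico] at hn
      have hb : blk n = m := hblk_eq m n hn.1 hn.2
      simp only [hξdef, hb, hj]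
      split_ifs with h
      · rw [one_mul, abs_of_nonneg h]
      · push_neg at h
        rw [neg_one_mul, abs_of_neg h]
    have hblocksum : (∑ n ∈ Finset.Ico (N m) (N (m+1)), ξ n * w j n)
        = ∑ n ∈ Finset.Ico (N m) (N (m+1)), |w j n| := Finset.sum_congr rfl hblock
    -- head bound
    have hheadb : |∑ n ∈ Finset.range (N m), ξ n * w j n| ≤ ∑ n ∈ Finset.range (N m), |w j n| := by
      refine le_trans (Finset.abs_sum_le_sum_abs _ _) (Finset.sum_le_sum fun n _ => ?_)
      rw [abs_mul]
      exact mul_le_of_le_one_left (abs_nonneg _) (hξ1 _)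
    have hε8 : (0:ℝ) < ε/8 := by linarith
    have hww : ε ≤ ∑' n, |w j n| := h2 j
    have hhd' := hhd m
    have htl' := htl m
    -- assemble
    have e1 : (∑ n ∈ Finset.Ico (N m) (N (m+1)), |w j n|)
        = (∑ n ∈ Finset.range (N (m+1)), |w j n|) - ∑ n ∈ Finset.range (N m), |w j n| := by
      linarith [hheadsplitw]
    have e2 : (∑ n ∈ Finset.range (N (m+1)), |w j n|)
        = (∑' n, |w j n|) - ∑' n, |w j (n + N (m+1))| := by linarith [hsplitw]
    have habs1 := abs_le.1 hheadb
    have habs2 := abs_le.1 htail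
    nlinarith [hsplit, hheadsplit, hblocksum]
  -- contradiction with h3
  have hJtend : Tendsto (fun m => J (m+1)) atTop atTop :=
    tendsto_atTop_mono (fun m => le_trans (Nat.le_succ m) (hJ m)) tendsto_id
  have := ((h3 ξ hξ1).comp hJtend).eventually_lt_const (show (0:ℝ) < ε/2 by linarith)
  obtain ⟨m, hm⟩ := this.exists
  exact absurd (hkey m) (not_le.2 hm)


/-- Key matrix lemma: if each column is absolutely summable and the pairings of the columns
with every bounded sequence form a Cauchy sequence, then the rows tend to zero uniformly in
the column index. -/
lemma key_matrix (a : ℕ → ℕ → ℝ)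
    (h1 : ∀ k, Summable fun n => |a n k|)
    (h2 : ∀ ξ : ℕ → ℝ, (∀ n, |ξ n| ≤ 1) → CauchySeq fun k => ∑' n, ξ n * a n k)
    {ε : ℝ} (hε : 0 < ε) :
    ∃ N, ∀ n ≥ N, ∀ k, |a n k| ≤ ε := by
  have hsum : ∀ (ξ : ℕ → ℝ), (∀ n, |ξ n| ≤ 1) → ∀ k, Summable fun n => ξ n * a n k := by
    intro ξ hξ k
    refine Summable.of_norm_bounded (h1 k) fun n => ?_
    rw [Real.norm_eq_abs, abs_mul]
    exact mul_le_of_le_one_left (abs_nonneg _) (hξ n)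
  have hdiff : ∀ k l, Summable fun n => |a n k - a n l| := by
    intro k l
    have : Summable fun n => |a n k| + |a n l| := (h1 k).add (h1 l)
    exact Summable.of_nonneg_of_le (fun n => abs_nonneg _)
      (fun n => abs_sub (a n k) (a n l)) this
  -- ℓ¹-norm Cauchy
  have hnc : ∀ δ : ℝ, 0 < δ → ∃ K, ∀ k ≥ K, ∀ l ≥ K, (∑' n, |a n k - a n l|) ≤ δ := by
    by_contra hcon
    push_neg at hcon
    obtain ⟨δ, hδ, hK⟩ := hcon
    choose k hk l hl hgt using hK
    refine schur_gliding (fun j n => a n (k j) - a n (l j)) δ hδ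
      (fun j => hdiff (k j) (l j)) (fun j => (hgt j).le) ?_
    intro ξ hξ
    obtain ⟨L, hL⟩ := cauchySeq_tendsto_of_complete (h2 ξ hξ)
    have hkt : Tendsto k atTop atTop := tendsto_atTop_mono hk tendsto_id
    have hlt : Tendsto l atTop atTop := tendsto_atTop_mono hl tendsto_id
    have heq : ∀ j, (∑' n, ξ n * (a n (k j) - a n (l j)))
        = (∑' n, ξ n * a n (k j)) - ∑' n, ξ n * a n (l j) := by
      intro j
      rw [← Summable.tsum_sub (hsum ξ hξ (k j)) (hsum ξ hξ (l j))]
      congr 1; ext n; ring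
    have : Tendsto (fun j => (∑' n, ξ n * a n (k j)) - ∑' n, ξ n * a n (l j)) atTop
        (𝓝 (L - L)) := (hL.comp hkt).sub (hL.comp hlt)
    rw [sub_self] at this
    simpa only [heq] using this
  obtain ⟨K, hK⟩ := hnc (ε/2) (by linarith)
  have hcoord : ∀ k, Tendsto (fun n => |a n k|) atTop (𝓝 0) := by
    intro k
    have := (h1 k).tendsto_atTop_zero
    simpa using this.abs
  have hev : ∀ᶠ n in atTop, ∀ k ∈ Finset.range (K+1), |a n k| ≤ ε/2 := by
    rw [Filter.eventually_all_finset]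
    intro k _
    exact (hcoord k).eventually_le_const (by linarith)
  obtain ⟨N, hN⟩ := Filter.eventually_atTop.1 hev
  refine ⟨N, fun n hn kk => ?_⟩
  by_cases hkk : kk ≤ K
  · have := hN n hn kk (Finset.mem_range.2 (Nat.lt_succ_of_le hkk))
    linarith
  · push_neg at hkk
    have h1' : |a n K| ≤ ε/2 := hN n hn K (Finset.mem_range.2 (Nat.lt_succ_self K))
    have h2' : |a n kk - a n K| ≤ ∑' m, |a m kk - a m K| :=
      Summable.le_tsum (hdiff kk K) n (fun m _ => abs_nonneg _)
    have h3' : (∑' m, |a m kk - a m K|) ≤ ε/2 := hK kk hkk.le K le_rfl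
    have h4' : |a n kk| ≤ |a n K| + |a n kk - a n K| := by
      have h := abs_add_le (a n K) (a n kk - a n K)
      simpa using h
    linarith

section VAst

variable {E : Type*} [AddCommGroup E] [Module ℝ E] [TopologicalSpace E]
  [IsTopologicalAddGroup E] [ContinuousSMul ℝ E]

/-- Evaluation at a point, as a continuous linear functional on the strong dual. -/
def evalCLM (y : E) : (E →L[ℝ] ℝ) →L[ℝ] ℝ where
  toFun := fun ψ => ψ y
  map_add' := fun ψ φ => rfl
  map_smul' := fun c ψ => rfl
  cont := continuous_eval_const y

/-- The range of a weakly Cauchy sequence is a `(1,∞)`-`(V*)` set. -/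
lemma range_isVAstSet
    (hbarrelled : ∀ B : Set E, IsClosed B → Convex ℝ B → Balanced ℝ B →
      Absorbent ℝ B → B ∈ nhds (0 : E))
    (x : ℕ → E) (hx : ∀ χ : E →L[ℝ] ℝ, CauchySeq fun n => χ (x n)) :
    IsVAstSet 1 ∞ (Set.range x) := by
  intro χ hχ
  -- absolute summability at every point of `E`
  have hsumm : ∀ y : E, Summable fun n => ‖χ n y‖ := by
    intro y
    rcases hχ (evalCLM y) with h | h
    · have h2 := h.2
      rw [memℓp_gen_iff (by norm_num)] at h2
      simpa [evalCLM] using h2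
    · exact absurd h.1 (by simp)
  -- the seminorm `y ↦ ∑' n, ‖χ n y‖`
  let p : Seminorm ℝ E :=
    { toFun := fun y => ∑' n, ‖χ n y‖
      map_zero' := by simp
      add_le' := fun y z => by
        calc (∑' n, ‖χ n (y + z)‖) ≤ ∑' n, (‖χ n y‖ + ‖χ n z‖) := by
              refine Summable.tsum_le_tsum (fun n => ?_) (hsumm _) ((hsumm y).add (hsumm z))
              rw [map_add]; exact norm_add_le _ _
          _ = (∑' n, ‖χ n y‖) + ∑' n, ‖χ n z‖ := Summable.tsum_add (hsumm y) (hsumm z)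
      neg' := fun y => by simp
      smul' := fun c y => by
        simp only [map_smul, smul_eq_mul, norm_mul]
        rw [tsum_mul_left] }
  have hp_apply : ∀ y, p y = ∑' n, ‖χ n y‖ := fun y => rfl
  -- `p` is continuous, by barrelledness
  have hclosed : IsClosed {y : E | p y ≤ 1} := by
    have heq : {y : E | p y ≤ 1}
        = ⋂ N : ℕ, {y : E | ∑ n ∈ Finset.range N, ‖χ n y‖ ≤ 1} := by
      ext y
      simp only [Set.mem_setOf_eq, Set.mem_iInter, hp_apply]
      constructor
      · intro h N
        exact le_trans (Summable.sum_le_tsum _ (fun n _ => norm_nonneg _) (hsumm y)) h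
      · intro h
        exact Real.tsum_le_of_sum_range_le (fun n => norm_nonneg _) h
    rw [heq]
    exact isClosed_iInter fun N => isClosed_le
      (continuous_finset_sum _ fun n _ => (χ n).continuous.norm) continuous_const
  have hball_eq : p.closedBall 0 1 = {y : E | p y ≤ 1} := by
    ext y; simp [Seminorm.mem_closedBall_zero]
  have hball : p.closedBall 0 1 ∈ 𝓝 (0 : E) := by
    rw [hball_eq]
    refine hbarrelled _ hclosed ?_ ?_ ?_
    · rw [← hball_eq]; exact p.convex_closedBall 0 1
    · rw [← hball_eq]; exact p.balanced_closedBall_zero 1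
    · rw [← hball_eq]; exact p.absorbent_closedBall_zero one_pos
  have hpcont : Continuous p := Seminorm.continuous' (r := 1) hball
  -- the functionals `g_ξ = ∑ ξ n • χ n`
  have hgξ : ∀ ξ : ℕ → ℝ, (∀ n, |ξ n| ≤ 1) →
      ∃ g : E →L[ℝ] ℝ, ∀ y, g y = ∑' n, ξ n * χ n y := by
    intro ξ hξ
    have hs : ∀ y : E, Summable fun n => ξ n * χ n y := by
      intro y
      refine Summable.of_norm_bounded (hsumm y) fun n => ?_
      rw [norm_mul, Real.norm_eq_abs]
      exact mul_le_of_le_one_left (norm_nonneg _) (hξ n)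
    have hb : ∀ y : E, ‖∑' n, ξ n * χ n y‖ ≤ p y := by
      intro y
      have hsn : Summable fun n => ‖ξ n * χ n y‖ := by
        refine Summable.of_nonneg_of_le (fun n => norm_nonneg _) (fun n => ?_) (hsumm y)
        rw [norm_mul, Real.norm_eq_abs]
        exact mul_le_of_le_one_left (norm_nonneg _) (hξ n)
      refine le_trans (norm_tsum_le_tsum_norm hsn) ?_
      rw [hp_apply]
      refine Summable.tsum_le_tsum (fun n => ?_) hsn (hsumm y)
      rw [norm_mul, Real.norm_eq_abs]
      exact mul_le_of_le_one_left (norm_nonneg _) (hξ n)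
    let g₀ : E →ₗ[ℝ] ℝ :=
      { toFun := fun y => ∑' n, ξ n * χ n y
        map_add' := fun y z => by
          simp only [map_add, mul_add]
          exact Summable.tsum_add (hs y) (hs z)
        map_smul' := fun c y => by
          simp only [map_smul, smul_eq_mul, RingHom.id_apply]
          rw [← tsum_mul_left]
          congr 1; ext n; ring }
    have hcont : Continuous g₀ := by
      refine continuous_of_continuousAt_zero g₀.toAddMonoidHom ?_
      have h0 : Tendsto g₀ (𝓝 0) (𝓝 0) := by
        refine squeeze_zero_norm hb ?_
        have := hpcont.tendsto 0
        simpa [map_zero] using this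
      simpa [ContinuousAt, map_zero] using h0
    exact ⟨⟨g₀, hcont⟩, fun y => rfl⟩
  -- conclude via the matrix lemma
  refine Or.inr ⟨rfl, ?_⟩
  rw [ENNReal.tendsto_atTop_zero]
  intro ε hε
  obtain ⟨r, hr0, hrε⟩ := ENNReal.lt_iff_exists_nnreal_btwn.1 hε
  have hr0' : (0:ℝ) < r := by exact_mod_cast ENNReal.coe_pos.1 hr0
  have h1 : ∀ k, Summable fun n => |χ n (x k)| := by
    intro k
    simpa [Real.norm_eq_abs] using hsumm (x k)
  have h2 : ∀ ξ : ℕ → ℝ, (∀ n, |ξ n| ≤ 1) →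
      CauchySeq fun k => ∑' n, ξ n * χ n (x k) := by
    intro ξ hξ
    obtain ⟨g, hg⟩ := hgξ ξ hξ
    have := hx g
    simpa only [hg] using this
  obtain ⟨N, hN⟩ := key_matrix (fun n k => χ n (x k)) h1 h2 hr0'
  refine ⟨N, fun n hn => ?_⟩
  rw [iSup_range]
  refine le_trans (iSup_le fun k => ?_) hrε.le
  have hk : |χ n (x k)| ≤ (r : ℝ) := hN n hn k
  rw [ENNReal.coe_le_coe]
  rw [← Real.norm_eq_abs] at hk
  exact_mod_cast hk

end VAst

/-- Let `E` be a barrelled locally convex space (every barrel — closed absolutely convex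
absorbing set — is a neighborhood of `0`). If `E` has the property `sV*`, i.e. every `(V*)`
subset of `E` is relatively weakly sequentially compact, then `E` is weakly sequentially
complete: every weakly Cauchy sequence in `E` converges in the weak topology of `E`. -/
theorem sVAst_implies_weakly_sequentially_complete
    {E : Type*} [AddCommGroup E] [Module ℝ E] [TopologicalSpace E]
    [IsTopologicalAddGroup E] [ContinuousSMul ℝ E] [LocallyConvexSpace ℝ E]
    (hbarrelled : ∀ B : Set E, IsClosed B → Convex ℝ B → Balanced ℝ B →
      Absorbent ℝ B → B ∈ nhds (0 : E))
    (hsV : ∀ A : Set E, IsVAstSet 1 ∞ A →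
      ∀ u : ℕ → E, (∀ n, u n ∈ A) → ∃ (y : E) (φ : ℕ → ℕ), StrictMono φ ∧
        Tendsto (fun n => toWeakSp (u (φ n))) atTop (nhds (toWeakSp y))) :
    ∀ x : ℕ → E, (∀ χ : E →L[ℝ] ℝ, CauchySeq fun n => χ (x n)) →
      ∃ y : E, Tendsto (fun n => toWeakSp (x n)) atTop (nhds (toWeakSp y)) := by
  intro x hx
  have hA : IsVAstSet 1 ∞ (Set.range x) := range_isVAstSet hbarrelled x hx
  obtain ⟨y, φ, hφ, hconv⟩ := hsV _ hA x (fun n => Set.mem_range_self n)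
  refine ⟨y, ?_⟩
  have hind : IsInducing (fun z : WeakSpace ℝ E => fun χ : E →L[ℝ] ℝ =>
      ((topDualPairing ℝ E).flip z) χ) := ⟨rfl⟩
  rw [hind.tendsto_nhds_iff, tendsto_pi_nhds]
  intro χ
  obtain ⟨L, hL⟩ := cauchySeq_tendsto_of_complete (hx χ)
  have hsub : Tendsto (fun n => χ (x (φ n))) atTop (𝓝 (χ y)) := by
    have h := hind.tendsto_nhds_iff.1 hconv
    rw [tendsto_pi_nhds] at h
    exact h χ
  have hLy : L = χ y := tendsto_nhds_unique (hL.comp hφ.tendsto_atTop) hsub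
  show Tendsto (fun n => χ (x n)) atTop (𝓝 (χ y))
  rwa [hLy] at hL


end
end
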